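/- Suppose a continuous map φ : S² → S² is the uniform limit (with respect to the metric of S²) of a sequence of homeomorphisms φₙ : S² → S². Then for every point v ∈ S², the fiber φ⁻¹(v) is nonempty and connected. -/

import Mathlib

open Set Filter Topology

noncomputable section

abbrev Sph : Type := Metric.sphere (0 : EuclideanSpace ℝ (Fin 3)) 1

local notation "E" => EuclideanSpace ℝ (Fin 3)
open scoped RealInnerProductSpace

lemma dist_le_iff_inner (v x : E) (hv : ‖v‖ = 1) (hx : ‖x‖ = 1) {r : ℝ} (hr : 0 ≤ r) :
    dist x v ≤ r ↔ 1 - r ^ 2 / 2 ≤ ⟪v, x⟫ := by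
  rw [dist_eq_norm]
  have h2 : ‖x - v‖ ^ 2 = 2 - 2 * ⟪v, x⟫ := by
    rw [norm_sub_sq_real, hx, hv, real_inner_comm]; ring
  constructor
  · intro h
    have := pow_le_pow_left₀ (norm_nonneg _) h 2
    rw [h2] at this; linarith
  · intro h
    have : ‖x - v‖ ^ 2 ≤ r ^ 2 := by rw [h2]; linarith
    exact le_of_pow_le_pow_left₀ two_ne_zero hr this

lemma cap_connected (v : Sph) {r : ℝ} (hr0 : 0 ≤ r) (hr1 : r ≤ 1) :
    IsConnected {x : Sph | dist x v ≤ r} := by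
  have hv : ‖(v : E)‖ = 1 := by
    have := v.2; simpa [mem_sphere_iff_norm] using this
  obtain ⟨c, hc⟩ : ∃ c : ℝ, c = 1 - r ^ 2 / 2 := ⟨_, rfl⟩
  have hc2 : (1:ℝ)/2 ≤ c := by rw [hc]; nlinarith
  set C : Set E := Metric.closedBall 0 1 ∩ {z | c ≤ ⟪(v:E), z⟫} with hC
  have hCconv : Convex ℝ C := (convex_closedBall _ _).inter
    (convex_halfSpace_ge ⟨fun a b => inner_add_right _ _ _,
      fun a b => real_inner_smul_right _ _ _⟩ c)
  have hvC : (v : E) ∈ C := by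
    constructor
    · simp [Metric.mem_closedBall, dist_eq_norm, hv]
    · simp only [mem_setOf_eq, real_inner_self_eq_norm_sq, hv]
      nlinarith [sq_nonneg r]
  have hCne : C.Nonempty := ⟨v, hvC⟩
  have hCconn : IsConnected C := ⟨hCne, hCconv.isPreconnected⟩
  set f : E → E := fun z => ‖z‖⁻¹ • z with hf
  have hzne : ∀ z ∈ C, z ≠ 0 := by
    intro z hz h0
    have := hz.2
    simp only [mem_setOf_eq, h0, inner_zero_right] at this
    linarith
  have hfc : ContinuousOn f C := by
    apply ContinuousOn.fun_smul _ continuousOn_id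
    exact (continuous_norm.continuousOn).inv₀ (fun z hz => by
      simpa [norm_eq_zero] using hzne z hz)
  have himg : f '' C = Subtype.val '' {x : Sph | dist x v ≤ r} := by
    ext x
    constructor
    · rintro ⟨z, hz, rfl⟩
      have hz0 : z ≠ 0 := hzne z hz
      have hzn : 0 < ‖z‖ := norm_pos_iff.mpr hz0
      have hzle : ‖z‖ ≤ 1 := by simpa [Metric.mem_closedBall, dist_eq_norm] using hz.1
      have hfx : ‖f z‖ = 1 := by
        rw [hf]; simp [norm_smul, abs_of_pos (inv_pos.mpr hzn), inv_mul_cancel₀ hzn.ne']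
      have hinner : c ≤ ⟪(v:E), f z⟫ := by
        rw [hf]
        simp only [real_inner_smul_right]
        have h1 : (1:ℝ) ≤ ‖z‖⁻¹ := (one_le_inv_iff₀.mpr ⟨hzn, hzle⟩)
        have h2 : c ≤ ⟪(v:E), z⟫ := hz.2
        have h3 : ⟪(v:E), z⟫ ≤ ‖z‖⁻¹ * ⟪(v:E), z⟫ :=
          le_mul_of_one_le_left (by linarith) h1
        linarith
      refine ⟨⟨f z, by simpa [mem_sphere_iff_norm] using hfx⟩, ?_, rfl⟩
      simp only [mem_setOf_eq, Subtype.dist_eq]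
      rw [hc] at hinner
      exact (dist_le_iff_inner _ _ hv hfx hr0).mpr hinner
    · rintro ⟨⟨x, hxS⟩, hx, rfl⟩
      have hxn : ‖x‖ = 1 := by simpa [mem_sphere_iff_norm] using hxS
      simp only [mem_setOf_eq, Subtype.dist_eq] at hx
      refine ⟨x, ⟨?_, ?_⟩, ?_⟩
      · simp [Metric.mem_closedBall, dist_eq_norm, hxn]
      · rw [hc]; exact (dist_le_iff_inner _ _ hv hxn hr0).mp hx
      · rw [hf]; simp [hxn]
  have : IsConnected (Subtype.val '' {x : Sph | dist x v ≤ r}) := by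
    rw [← himg]; exact hCconn.image f hfc
  obtain ⟨hne, hpc⟩ := this
  refine ⟨?_, IsInducing.subtypeVal.isPreconnected_image.mp hpc⟩
  obtain ⟨x, y, hy, rfl⟩ := hne
  exact ⟨y, hy⟩

/-- If a continuous map `φ : S² → S²` is the uniform limit of a sequence of
homeomorphisms `φₙ : S² → S²`, then every fiber `φ⁻¹ {v}` is nonempty and connected. -/
theorem fiber_connected_of_uniform_limit_of_homeos (φ : Sph → Sph) (hφ : Continuous φ)
    (φn : ℕ → Sph ≃ₜ Sph)
    (hconv : TendstoUniformly (fun n x => φn n x) φ atTop) :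
    ∀ v : Sph, IsConnected (φ ⁻¹' {v}) := by
  intro v
  rw [Metric.tendstoUniformly_iff] at hconv
  set F : Set Sph := φ ⁻¹' {v} with hFdef
  set N : ℝ → Set Sph := fun s => φ ⁻¹' Metric.closedBall v s with hNdef
  have hNcl : ∀ s, IsClosed (N s) := fun s => Metric.isClosed_closedBall.preimage hφ
  have hNcomp : ∀ s, IsCompact (N s) := fun s => (hNcl s).isCompact
  have hNmono : ∀ ⦃s t : ℝ⦄, s ≤ t → N s ⊆ N t := by
    intro s t hst x hx
    exact le_trans hx hst
  -- each N s with s > 0 is nonempty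
  have hNne : ∀ s : ℝ, 0 < s → (N s).Nonempty := by
    intro s hs
    obtain ⟨m, hm⟩ := (hconv s hs).exists
    refine ⟨(φn m).symm v, ?_⟩
    have h1 := hm ((φn m).symm v)
    simp only [Homeomorph.apply_symm_apply] at h1
    simp only [hNdef, mem_preimage, Metric.mem_closedBall]
    exact h1.le
  -- fiber as intersection of the N (1/(n+1))
  have hFiInter : F = ⋂ n : ℕ, N (1 / (n + 1)) := by
    ext x
    simp only [hFdef, hNdef, mem_preimage, mem_singleton_iff, mem_iInter,
      Metric.mem_closedBall]
    constructor
    · rintro rfl n; rw [dist_self]; positivity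
    · intro h
      rw [← dist_eq_zero]
      by_contra hne
      have hpos : 0 < dist (φ x) v := lt_of_le_of_ne dist_nonneg (Ne.symm hne)
      obtain ⟨n, hn⟩ := exists_nat_one_div_lt hpos
      exact absurd (h n) (not_le.mpr hn)
  have hdir : Directed (· ⊇ ·) (fun n : ℕ => N (1 / (n + 1))) := by
    intro m n
    refine ⟨max m n, hNmono (one_div_le_one_div_of_le (by positivity) ?_),
      hNmono (one_div_le_one_div_of_le (by positivity) ?_)⟩
    · have : (m : ℝ) ≤ max m n := by exact_mod_cast le_max_left m n
      linarith
    · have : (n : ℝ) ≤ max m n := by exact_mod_cast le_max_right m n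
      linarith
  have hFne : F.Nonempty := by
    rw [hFiInter]
    exact IsCompact.nonempty_iInter_of_directed_nonempty_isCompact_isClosed _ hdir
      (fun n => hNne _ (by positivity)) (fun n => hNcomp _) (fun n => hNcl _)
  refine ⟨hFne, ?_⟩
  rintro U V hU hV hUV ⟨a, haF, haU⟩ ⟨b, hbF, hbV⟩
  by_contra hcon
  rw [Set.not_nonempty_iff_eq_empty] at hcon
  have hFcl : IsClosed F := isClosed_singleton.preimage hφ
  have hAcl : IsClosed (F ∩ U) := by
    have he : F ∩ U = F ∩ Vᶜ := by
      ext x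
      constructor
      · rintro ⟨hxF, hxU⟩
        refine ⟨hxF, fun hxV => ?_⟩
        have : x ∈ F ∩ (U ∩ V) := ⟨hxF, hxU, hxV⟩
        simp [hcon] at this
      · rintro ⟨hxF, hxV⟩
        rcases hUV hxF with h | h
        exacts [⟨hxF, h⟩, absurd h hxV]
    rw [he]; exact hFcl.inter (isClosed_compl_iff.mpr hV)
  have hBcl : IsClosed (F ∩ V) := by
    have he : F ∩ V = F ∩ Uᶜ := by
      ext x
      constructor
      · rintro ⟨hxF, hxV⟩
        refine ⟨hxF, fun hxU => ?_⟩
        have : x ∈ F ∩ (U ∩ V) := ⟨hxF, hxU, hxV⟩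
        simp [hcon] at this
      · rintro ⟨hxF, hxU⟩
        rcases hUV hxF with h | h
        exacts [absurd h hxU, ⟨hxF, h⟩]
    rw [he]; exact hFcl.inter (isClosed_compl_iff.mpr hU)
  have hdisjAB : Disjoint (F ∩ U) (F ∩ V) := by
    rw [Set.disjoint_left]
    rintro x ⟨hxF, hxU⟩ ⟨-, hxV⟩
    have : x ∈ F ∩ (U ∩ V) := ⟨hxF, hxU, hxV⟩
    simp [hcon] at this
  obtain ⟨U', V', hU'o, hV'o, hAU', hBV', hd'⟩ :=
    SeparatedNhds.of_isCompact_isCompact hAcl.isCompact hBcl.isCompact hdisjAB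
  have hFsub : F ⊆ U' ∪ V' := by
    intro x hx
    rcases hUV hx with h | h
    · exact Or.inl (hAU' ⟨hx, h⟩)
    · exact Or.inr (hBV' ⟨hx, h⟩)
  -- some small set N (1/(n+1)) is contained in U' ∪ V'
  have hstep : ∃ n : ℕ, N (1 / (n + 1)) ⊆ U' ∪ V' := by
    by_contra hno
    push_neg at hno
    have hcl2 : ∀ n : ℕ, IsClosed (N (1 / (n + 1)) ∩ (U' ∪ V')ᶜ) := fun n =>
      (hNcl _).inter (isClosed_compl_iff.mpr (hU'o.union hV'o))
    have hnon : (⋂ n : ℕ, N (1 / (n + 1)) ∩ (U' ∪ V')ᶜ).Nonempty := by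
      apply IsCompact.nonempty_iInter_of_directed_nonempty_isCompact_isClosed
      · intro m n
        obtain ⟨k, h1, h2⟩ := hdir m n
        exact ⟨k, inter_subset_inter_left _ h1, inter_subset_inter_left _ h2⟩
      · intro n
        obtain ⟨x, hx1, hx2⟩ := Set.not_subset.mp (hno n)
        exact ⟨x, hx1, hx2⟩
      · intro n; exact (hcl2 n).isCompact
      · exact hcl2
    obtain ⟨x, hx⟩ := hnon
    simp only [mem_iInter, mem_inter_iff] at hx
    have hxF : x ∈ F := by
      rw [hFiInter]; exact mem_iInter.mpr fun n => (hx n).1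
    exact (hx 0).2 (hFsub hxF)
  obtain ⟨n₀, hn₀⟩ := hstep
  obtain ⟨s, hsdef⟩ : ∃ s : ℝ, s = 1 / ((n₀ : ℝ) + 1) := ⟨_, rfl⟩
  have hspos : 0 < s := by rw [hsdef]; positivity
  obtain ⟨ε, hεdef⟩ : ∃ ε : ℝ, ε = min (s / 2) 1 := ⟨_, rfl⟩
  have hεpos : 0 < ε := by rw [hεdef]; exact lt_min (by positivity) one_pos
  obtain ⟨m, hm⟩ := (hconv ε hεpos).exists
  have hDconn : IsConnected ((φn m) ⁻¹' {y : Sph | dist y v ≤ ε}) := by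
    have hcap := cap_connected v hεpos.le (by rw [hεdef]; exact min_le_right _ _)
    have h2 := hcap.image _ (φn m).symm.continuous.continuousOn
    rwa [Homeomorph.image_symm] at h2
  have hFD : F ⊆ (φn m) ⁻¹' {y : Sph | dist y v ≤ ε} := by
    intro x hx
    have hxv : φ x = v := hx
    have h1 := hm x
    rw [hxv] at h1
    simp only [mem_preimage, mem_setOf_eq]
    rw [dist_comm]
    exact h1.le
  have hDsub : (φn m) ⁻¹' {y : Sph | dist y v ≤ ε} ⊆ U' ∪ V' := by
    intro x hx
    apply hn₀
    have h1 := hm x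
    have h2 : dist ((φn m) x) v ≤ ε := hx
    have h3 : ε ≤ s / 2 := by rw [hεdef]; exact min_le_left _ _
    have : dist (φ x) v ≤ s := by
      calc dist (φ x) v ≤ dist (φ x) ((φn m) x) + dist ((φn m) x) v := dist_triangle _ _ _
        _ ≤ ε + ε := by linarith
        _ ≤ s := by linarith
    simpa [hNdef, Metric.mem_closedBall, hsdef] using this
  have hfin := hDconn.isPreconnected U' V' hU'o hV'o hDsub
    ⟨a, hFD haF, hAU' ⟨haF, haU⟩⟩ ⟨b, hFD hbF, hBV' ⟨hbF, hbV⟩⟩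
  obtain ⟨x, -, hxU', hxV'⟩ := hfin
  exact Set.disjoint_left.mp hd' hxU' hxV'
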